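/- arXiv:2408.13401 — 2 statements merged into one kernel-verified Lean document; each statement's English description precedes it below -/
import Mathlib

section
/- Let M be an n×n irreducible matrix with nonnegative entries and spectral radius λ > 0, and let x be a nonzero vector with nonnegative entries. Then limsup_{k→∞} (1/k)·log(‖M^k x‖₁) = log λ; in fact the limit exists and equals log λ. -/
open Matrix Filter

/-- The spectral radius of a real square matrix: the supremum of the absolute
values of its complex eigenvalues. -/
noncomputable def specRad {m : Type*} [Fintype m] [DecidableEq m] (M : Matrix m m ℝ) : ℝ :=
  sSup ((fun z : ℂ => ‖z‖) '' spectrum ℂ (M.map Complex.ofReal))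

/-- A nonnegative square matrix is irreducible if for every pair of indices `(i,j)`
some power of the matrix has positive `(i,j)` entry. -/
def MatIrreducible {m : Type*} [Fintype m] [DecidableEq m] (M : Matrix m m ℝ) : Prop :=
  ∀ i j, ∃ N : ℕ, 0 < N ∧ 0 < (M ^ N) i j

/- ### Auxiliary material -/

attribute [local instance] Matrix.linftyOpNormedRing Matrix.linftyOpNormedAlgebra

set_option linter.unusedSectionVars false

noncomputable local instance {n : ℕ} : CompleteSpace (Matrix (Fin n) (Fin n) ℂ) :=
  FiniteDimensional.complete ℂ _

theorem aux_specRad_eq {n : ℕ} [NeZero n] (M : Matrix (Fin n) (Fin n) ℝ) :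
    spectralRadius ℂ (M.map Complex.ofReal) = ENNReal.ofReal (specRad M) := by
  set A := M.map Complex.ofReal with hAdef
  show spectralRadius ℂ A = ENNReal.ofReal (sSup ((fun z : ℂ => ‖z‖) '' spectrum ℂ A))
  have hne : (spectrum ℂ A).Nonempty := spectrum.nonempty A
  have hbd : BddAbove ((fun z : ℂ => ‖z‖) '' spectrum ℂ A) := by
    refine ⟨‖A‖, ?_⟩
    rintro y ⟨z, hz, rfl⟩
    simpa using
      (spectrum.norm_le_norm_of_mem (𝕜 := ℂ) hz)
  set r := sSup ((fun z : ℂ => ‖z‖) '' spectrum ℂ A) with hr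
  obtain ⟨z₀, hz₀⟩ := hne
  have hr0 : 0 ≤ r := le_trans (norm_nonneg z₀) (le_csSup hbd ⟨z₀, hz₀, rfl⟩)
  have htop : spectralRadius ℂ A ≠ ⊤ := by
    refine ne_of_lt (lt_of_le_of_lt ?_ (ENNReal.ofReal_lt_top : ENNReal.ofReal (‖A‖ + 1) < ⊤))
    refine iSup₂_le fun z hz => ?_
    rw [← enorm_eq_nnnorm, ← ofReal_norm]
    exact ENNReal.ofReal_le_ofReal
      ((spectrum.norm_le_norm_of_mem (𝕜 := ℂ) hz).trans (by linarith))
  apply le_antisymm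
  · refine iSup₂_le fun z hz => ?_
    rw [← enorm_eq_nnnorm, ← ofReal_norm]
    exact ENNReal.ofReal_le_ofReal (le_csSup hbd ⟨z, hz, by simp⟩)
  · rw [← ENNReal.ofReal_toReal htop]
    refine ENNReal.ofReal_le_ofReal ?_
    refine Real.sSup_le ?_ ENNReal.toReal_nonneg
    rintro y ⟨z, hz, rfl⟩
    have h1 : (‖z‖₊ : ENNReal) ≤ spectralRadius ℂ A :=
      le_iSup₂ (f := fun z _ => (‖z‖₊ : ENNReal)) z hz
    have := ENNReal.toReal_mono htop h1
    simpa using this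

theorem aux_gelfand_log {n : ℕ} (A : Matrix (Fin n) (Fin n) ℂ) {r : ℝ} (hr : 0 < r)
    (hrad : spectralRadius ℂ A = ENNReal.ofReal r) (hA : ∀ k : ℕ, 0 < ‖A ^ k‖) :
    Tendsto (fun k : ℕ => (1 / (k:ℝ)) * Real.log ‖A ^ k‖) atTop (nhds (Real.log r)) := by
  have h := spectrum.pow_nnnorm_pow_one_div_tendsto_nhds_spectralRadius A
  rw [hrad] at h
  have h2 : Tendsto (fun k : ℕ => ‖A ^ k‖ ^ (1 / (k:ℝ))) atTop (nhds r) := by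
    have := (ENNReal.tendsto_toReal (ENNReal.ofReal_ne_top)).comp h
    simp only [Function.comp_def] at this
    convert this using 2 with k
    · rw [← ENNReal.toReal_rpow]
      simp
    · exact (ENNReal.toReal_ofReal hr.le).symm
  have h3 := (Real.continuousAt_log hr.ne').tendsto.comp h2
  simp only [Function.comp_def] at h3
  convert h3 using 2 with k
  rw [Real.log_rpow (hA k), mul_comm]

theorem aux_row_sum_le_norm {n : ℕ} (C : Matrix (Fin n) (Fin n) ℂ) (i : Fin n) :
    ∑ j, ‖C i j‖ ≤ ‖C‖ := by
  have h : ∑ j, ‖C i j‖₊ ≤ ‖C‖₊ := by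
    rw [Matrix.linfty_opNNNorm_def]
    exact Finset.le_sup (f := fun i => ∑ j, ‖C i j‖₊) (Finset.mem_univ i)
  have := NNReal.coe_le_coe.mpr h
  simpa [NNReal.coe_sum] using this

theorem aux_norm_le_total {n : ℕ} (C : Matrix (Fin n) (Fin n) ℂ) :
    ‖C‖ ≤ ∑ i, ∑ j, ‖C i j‖ := by
  have h : ‖C‖₊ ≤ ∑ i, ∑ j, ‖C i j‖₊ := by
    rw [Matrix.linfty_opNNNorm_def]
    exact Finset.sup_le fun i _ =>
      Finset.single_le_sum (f := fun i => ∑ j, ‖C i j‖₊) (fun i _ => zero_le)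
        (Finset.mem_univ i)
  have := NNReal.coe_le_coe.mpr h
  simpa [NNReal.coe_sum] using this

section comb
variable {n : ℕ} [NeZero n] {M : Matrix (Fin n) (Fin n) ℝ}
  (hpos : ∀ i j, 0 ≤ M i j)
include hpos

theorem aux_pow_entry_nonneg : ∀ (k : ℕ) (i j : Fin n), 0 ≤ (M ^ k) i j := by
  intro k
  induction k with
  | zero => intro i j; by_cases h : i = j <;> simp [Matrix.one_apply, h]
  | succ m ih =>
    intro i j
    rw [pow_succ, Matrix.mul_apply]
    exact Finset.sum_nonneg fun p _ => mul_nonneg (ih i p) (hpos p j)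

variable (hirr : MatIrreducible M)
include hirr

theorem aux_exists_col_pos : ∀ j, ∃ i, 0 < M i j := by
  intro j
  obtain ⟨N, hN, hentry⟩ := hirr j j
  obtain ⟨m, rfl⟩ : ∃ m, N = m + 1 := ⟨N - 1, by omega⟩
  rw [pow_succ, Matrix.mul_apply] at hentry
  obtain ⟨p, -, hp⟩ := Finset.exists_lt_of_sum_lt
    (s := Finset.univ) (f := fun _ : Fin n => (0:ℝ))
    (g := fun p => (M ^ m) j p * M p j) (by simpa using hentry)
  refine ⟨p, ?_⟩
  by_contra h
  push_neg at h
  have h0 : M p j = 0 := le_antisymm h (hpos p j)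
  rw [h0, mul_zero] at hp
  exact lt_irrefl 0 hp

theorem aux_exists_nu : ∃ ν > (0:ℝ), ∀ j, ν ≤ ∑ i, M i j := by
  obtain ⟨j₀, -, hj₀⟩ := Finset.exists_min_image Finset.univ (fun j => ∑ i, M i j)
    (Finset.univ_nonempty)
  obtain ⟨i₀, hi₀⟩ := aux_exists_col_pos hpos hirr j₀
  refine ⟨∑ i, M i j₀, ?_, fun j => hj₀ j (Finset.mem_univ j)⟩
  exact lt_of_lt_of_le hi₀ (Finset.single_le_sum (fun i _ => hpos i j₀) (Finset.mem_univ i₀))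

omit hirr in
theorem aux_colsum_step {ν : ℝ} (hν : ∀ p, ν ≤ ∑ i, M i p) (hν0 : 0 ≤ ν) (j : Fin n) (s : ℕ) :
    ν * (∑ i, (M ^ s) i j) ≤ ∑ i, (M ^ (s+1)) i j := by
  have : ∀ i, (M ^ (s+1)) i j = ∑ p, M i p * (M ^ s) p j := by
    intro i; rw [pow_succ']; rfl
  simp only [this]
  rw [Finset.sum_comm, Finset.mul_sum]
  refine Finset.sum_le_sum fun p _ => ?_
  rw [← Finset.sum_mul]
  exact mul_le_mul_of_nonneg_right (hν p) (aux_pow_entry_nonneg hpos s p j)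

theorem aux_colsum_pos (j : Fin n) (s : ℕ) : 0 < ∑ i, (M ^ s) i j := by
  obtain ⟨ν, hν0, hν⟩ := aux_exists_nu hpos hirr
  induction s with
  | zero => simp [Matrix.one_apply]
  | succ m ih =>
    calc (0:ℝ) < ν * ∑ i, (M ^ m) i j := mul_pos hν0 ih
    _ ≤ _ := aux_colsum_step hpos hν hν0.le j m

omit hirr in
theorem aux_colsum_iter {ν : ℝ} (hν : ∀ p, ν ≤ ∑ i, M i p) (hν0 : 0 ≤ ν) (j : Fin n) (s d : ℕ) :
    ν ^ d * (∑ i, (M ^ s) i j) ≤ ∑ i, (M ^ (s+d)) i j := by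
  induction d with
  | zero => simp
  | succ m ih =>
    have h1 := aux_colsum_step hpos hν hν0 j (s+m)
    calc ν ^ (m+1) * ∑ i, (M ^ s) i j = ν * (ν ^ m * ∑ i, (M ^ s) i j) := by ring
    _ ≤ ν * ∑ i, (M ^ (s+m)) i j := mul_le_mul_of_nonneg_left ih hν0
    _ ≤ ∑ i, (M ^ (s+m+1)) i j := h1
    _ = ∑ i, (M ^ (s+(m+1))) i j := by ring_nf

theorem aux_exists_T_delta : ∃ T : ℕ, 1 ≤ T ∧ ∃ δ > (0:ℝ), ∀ p j,
    δ ≤ ∑ t ∈ Finset.Icc 1 T, (M ^ t) p j := by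
  choose N hN1 hN2 using hirr
  set T := Finset.univ.sup (fun pr : Fin n × Fin n => N pr.1 pr.2) with hT
  have hNle : ∀ p j, N p j ≤ T := fun p j =>
    Finset.le_sup (f := fun pr : Fin n × Fin n => N pr.1 pr.2) (Finset.mem_univ (p, j))
  have key : ∀ p j, 0 < ∑ t ∈ Finset.Icc 1 T, (M ^ t) p j := by
    intro p j
    have hmem : N p j ∈ Finset.Icc 1 T := Finset.mem_Icc.mpr ⟨hN1 p j, hNle p j⟩
    exact lt_of_lt_of_le (hN2 p j)
      (Finset.single_le_sum (fun t _ => aux_pow_entry_nonneg hpos t p j) hmem)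
  obtain ⟨pr₀, -, hpr₀⟩ := Finset.exists_min_image Finset.univ
    (fun pr : Fin n × Fin n => ∑ t ∈ Finset.Icc 1 T, (M ^ t) pr.1 pr.2) Finset.univ_nonempty
  have hT1 : 1 ≤ T := le_trans (hN1 pr₀.1 pr₀.2) (hNle pr₀.1 pr₀.2)
  exact ⟨T, hT1, _, key pr₀.1 pr₀.2, fun p j => hpr₀ (p, j) (Finset.mem_univ _)⟩

theorem aux_main_lower : ∃ T : ℕ, 1 ≤ T ∧ ∃ c > (0:ℝ), ∀ (j : Fin n) (k : ℕ),
    c * (∑ i, ∑ p, (M ^ k) i p) ≤ ∑ i, (M ^ (k+T)) i j := by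
  obtain ⟨ν, hν0, hν⟩ := aux_exists_nu hpos hirr
  obtain ⟨T, hT1, δ, hδ0, hδ⟩ := aux_exists_T_delta hpos hirr
  set m := min 1 ν with hm
  have hm0 : 0 < m := lt_min one_pos hν0
  refine ⟨T, hT1, m ^ T * δ / T, by positivity, fun j k => ?_⟩
  set g := ∑ i, ∑ p, (M ^ k) i p with hg
  have hg0 : 0 ≤ g := Finset.sum_nonneg fun i _ =>
    Finset.sum_nonneg fun p _ => aux_pow_entry_nonneg hpos k i p
  have step1 : δ * g ≤ ∑ t ∈ Finset.Icc 1 T, ∑ i, (M ^ (k+t)) i j := by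
    have expand : ∀ t, ∑ i, (M ^ (k+t)) i j = ∑ i, ∑ p, (M ^ k) i p * (M ^ t) p j := by
      intro t
      refine Finset.sum_congr rfl fun i _ => ?_
      rw [pow_add]; rfl
    calc δ * g = ∑ i, ∑ p, (M ^ k) i p * δ := by
          rw [hg, Finset.mul_sum]
          exact Finset.sum_congr rfl fun i _ => by
            rw [Finset.mul_sum]
            exact Finset.sum_congr rfl fun p _ => mul_comm _ _
      _ ≤ ∑ i, ∑ p, (M ^ k) i p * ∑ t ∈ Finset.Icc 1 T, (M ^ t) p j := by
          refine Finset.sum_le_sum fun i _ => Finset.sum_le_sum fun p _ => ?_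
          exact mul_le_mul_of_nonneg_left (hδ p j) (aux_pow_entry_nonneg hpos k i p)
      _ = ∑ i, ∑ p, ∑ t ∈ Finset.Icc 1 T, (M ^ k) i p * (M ^ t) p j :=
          Finset.sum_congr rfl fun i _ => Finset.sum_congr rfl fun p _ =>
            Finset.mul_sum _ _ _
      _ = ∑ i, ∑ t ∈ Finset.Icc 1 T, ∑ p, (M ^ k) i p * (M ^ t) p j :=
          Finset.sum_congr rfl fun i _ => Finset.sum_comm
      _ = ∑ t ∈ Finset.Icc 1 T, ∑ i, ∑ p, (M ^ k) i p * (M ^ t) p j := Finset.sum_comm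
      _ = ∑ t ∈ Finset.Icc 1 T, ∑ i, (M ^ (k+t)) i j :=
          Finset.sum_congr rfl fun t _ => (expand t).symm
  have hTpos : (0:ℝ) < T := by exact_mod_cast hT1
  obtain ⟨t, ht, ht2⟩ := Finset.exists_le_of_sum_le
    (s := Finset.Icc 1 T) (f := fun _ => δ * g / T)
    (g := fun t => ∑ i, (M ^ (k+t)) i j)
    ⟨1, Finset.mem_Icc.mpr ⟨le_refl 1, hT1⟩⟩
    (by
      rw [Finset.sum_const, Nat.card_Icc]
      simp only [Nat.add_sub_cancel, nsmul_eq_mul]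
      rw [mul_div_cancel₀ _ hTpos.ne']
      exact step1)
  have htT : t ≤ T := (Finset.mem_Icc.mp ht).2
  have key : ν ^ (T - t) * ∑ i, (M ^ (k+t)) i j ≤ ∑ i, (M ^ (k+T)) i j := by
    have := aux_colsum_iter hpos hν hν0.le j (k+t) (T-t)
    rwa [show k + t + (T - t) = k + T by omega] at this
  have hmν : m ^ T ≤ ν ^ (T - t) := by
    calc m ^ T = m ^ (T - t) * m ^ t := by rw [← pow_add]; congr 1; omega
      _ ≤ ν ^ (T - t) * 1 := by
          refine mul_le_mul (pow_le_pow_left₀ hm0.le (min_le_right 1 ν) _)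
            (pow_le_one₀ hm0.le (min_le_left 1 ν)) (by positivity) (by positivity)
      _ = ν ^ (T - t) := mul_one _
  calc m ^ T * δ / T * g = m ^ T * (δ * g / T) := by ring
    _ ≤ ν ^ (T - t) * (δ * g / T) := mul_le_mul_of_nonneg_right hmν (by positivity)
    _ ≤ ν ^ (T - t) * ∑ i, (M ^ (k+t)) i j := mul_le_mul_of_nonneg_left ht2 (by positivity)
    _ ≤ ∑ i, (M ^ (k+T)) i j := key

end comb

/-- For an irreducible nonnegative matrix `M` with spectral radius `λ > 0` and a nonzero
nonnegative vector `x`, `(1/k) log ‖M^k x‖₁` converges to `log λ` (in particular the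
limsup equals `log λ`). -/
theorem growth_rate_of_irreducible_matrix_on_nonneg_vector
    {n : ℕ} (M : Matrix (Fin n) (Fin n) ℝ)
    (hpos : ∀ i j, 0 ≤ M i j) (hirr : MatIrreducible M)
    (hlam : 0 < specRad M)
    (x : Fin n → ℝ) (hx : x ≠ 0) (hxpos : ∀ i, 0 ≤ x i) :
    Tendsto (fun k : ℕ => (1 / (k : ℝ)) * Real.log (∑ i, |((M ^ k).mulVec x) i|))
        atTop (nhds (Real.log (specRad M)))
    ∧ limsup (fun k : ℕ => (1 / (k : ℝ)) * Real.log (∑ i, |((M ^ k).mulVec x) i|)) atTop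
        = Real.log (specRad M) := by
  haveI : NeZero n := ⟨fun h => hx (by subst h; exact funext fun i => i.elim0)⟩
  obtain ⟨j₀, hj₀⟩ : ∃ j, 0 < x j := by
    by_contra h
    push_neg at h
    exact hx (funext fun i => le_antisymm (h i) (hxpos i))
  set lam := specRad M with hlam_def
  set A := M.map Complex.ofReal with hAdef
  have hAk : ∀ k : ℕ, A ^ k = (M ^ k).map Complex.ofReal := by
    intro k
    rw [hAdef]
    have := map_pow (Complex.ofRealHom.mapMatrix) M k
    simp [RingHom.mapMatrix_apply] at this
    exact this.symm
  have hspec : spectralRadius ℂ A = ENNReal.ofReal lam := aux_specRad_eq M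
  -- the total-entry-sum function
  set g : ℕ → ℝ := fun k => ∑ i, ∑ p, (M ^ k) i p with hgdef
  set f : ℕ → ℝ := fun k => ∑ i, ∑ p, (M ^ k) i p * x p with hfdef
  have hfk : ∀ k, (∑ i, |((M ^ k).mulVec x) i|) = f k := by
    intro k
    refine Finset.sum_congr rfl fun i _ => ?_
    have hmv : (M ^ k *ᵥ x) i = ∑ p, (M ^ k) i p * x p := rfl
    rw [hmv, abs_of_nonneg (Finset.sum_nonneg fun p _ =>
      mul_nonneg (aux_pow_entry_nonneg hpos k i p) (hxpos p))]
  have hg_pos : ∀ k, 0 < g k := by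
    intro k
    rw [show g k = ∑ p, ∑ i, (M ^ k) i p from Finset.sum_comm]
    exact Finset.sum_pos (fun p _ => aux_colsum_pos hpos hirr p k) Finset.univ_nonempty
  have hf_eq : ∀ k, f k = ∑ p, (∑ i, (M ^ k) i p) * x p := fun k =>
    Finset.sum_comm.trans (Finset.sum_congr rfl fun p _ => (Finset.sum_mul _ _ _).symm)
  have hcol_nonneg : ∀ p k, 0 ≤ ∑ i, (M ^ k) i p := fun p k =>
    Finset.sum_nonneg fun i _ => aux_pow_entry_nonneg hpos k i p
  have hf_pos : ∀ k, 0 < f k := by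
    intro k
    rw [hf_eq]
    refine lt_of_lt_of_le (mul_pos (aux_colsum_pos hpos hirr j₀ k) hj₀) ?_
    exact Finset.single_le_sum
      (f := fun p => (∑ i, (M ^ k) i p) * x p)
      (fun p _ => mul_nonneg (hcol_nonneg p k) (hxpos p)) (Finset.mem_univ j₀)
  set X := ∑ p, x p with hXdef
  have hX_pos : 0 < X :=
    lt_of_lt_of_le hj₀ (Finset.single_le_sum (fun p _ => hxpos p) (Finset.mem_univ j₀))
  have hcol_le_g : ∀ p k, (∑ i, (M ^ k) i p) ≤ g k := by
    intro p k
    rw [show g k = ∑ p, ∑ i, (M ^ k) i p from Finset.sum_comm]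
    exact Finset.single_le_sum (f := fun p => ∑ i, (M ^ k) i p)
      (fun p _ => hcol_nonneg p k) (Finset.mem_univ p)
  have hf_le : ∀ k, f k ≤ X * g k := by
    intro k
    rw [hf_eq]
    calc ∑ p, (∑ i, (M ^ k) i p) * x p ≤ ∑ p, g k * x p := by
          refine Finset.sum_le_sum fun p _ => ?_
          exact mul_le_mul_of_nonneg_right (hcol_le_g p k) (hxpos p)
      _ = X * g k := by rw [← Finset.mul_sum, ← hXdef, mul_comm]
  obtain ⟨T, hT1, c, hc0, hcl⟩ := aux_main_lower hpos hirr
  have hfl : ∀ k, (x j₀ * c) * g k ≤ f (k + T) := by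
    intro k
    calc (x j₀ * c) * g k = (c * g k) * x j₀ := by ring
      _ ≤ (∑ i, (M ^ (k+T)) i j₀) * x j₀ :=
          mul_le_mul_of_nonneg_right (hcl j₀ k) hj₀.le
      _ ≤ f (k + T) := by
          rw [hf_eq]
          exact Finset.single_le_sum
            (f := fun p => (∑ i, (M ^ (k+T)) i p) * x p)
            (fun p _ => mul_nonneg (hcol_nonneg p _) (hxpos p)) (Finset.mem_univ j₀)
  -- norm comparisons
  have hentry_norm : ∀ k i p, ‖(A ^ k) i p‖ = (M ^ k) i p := by
    intro k i p
    rw [hAk k]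
    simp [Matrix.map_apply, Complex.norm_real,
      Real.norm_eq_abs, abs_of_nonneg (aux_pow_entry_nonneg hpos k i p)]
  have hnorm_le : ∀ k, ‖A ^ k‖ ≤ g k := by
    intro k
    refine (aux_norm_le_total (A ^ k)).trans_eq ?_
    exact Finset.sum_congr rfl fun i _ => Finset.sum_congr rfl fun p _ => hentry_norm k i p
  have hg_le_norm : ∀ k, g k ≤ n * ‖A ^ k‖ := by
    intro k
    have : g k = ∑ i : Fin n, ∑ p, ‖(A ^ k) i p‖ :=
      (Finset.sum_congr rfl fun i _ => Finset.sum_congr rfl fun p _ =>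
        (hentry_norm k i p).symm)
    rw [this]
    calc ∑ i : Fin n, ∑ p, ‖(A ^ k) i p‖ ≤ ∑ _i : Fin n, ‖A ^ k‖ :=
          Finset.sum_le_sum fun i _ => aux_row_sum_le_norm (A ^ k) i
      _ = n * ‖A ^ k‖ := by simp [Finset.sum_const, mul_comm]
  have hAnorm_pos : ∀ k, 0 < ‖A ^ k‖ := by
    intro k
    by_contra h
    push_neg at h
    have h0 : ‖A ^ k‖ = 0 := le_antisymm h (norm_nonneg _)
    have := hg_le_norm k
    rw [h0, mul_zero] at this
    exact absurd (lt_of_lt_of_le (hg_pos k) this) (lt_irrefl 0)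
  have gelf := aux_gelfand_log A hlam hspec hAnorm_pos
  -- convergence of (1/k) log (g k)
  have one_div_tendsto : Tendsto (fun k : ℕ => 1/(k:ℝ)) atTop (nhds 0) :=
    tendsto_one_div_atTop_nhds_zero_nat
  have hu : Tendsto (fun k : ℕ => (1/(k:ℝ)) * Real.log (g k)) atTop (nhds (Real.log lam)) := by
    refine tendsto_of_tendsto_of_tendsto_of_le_of_le
      (h := fun k : ℕ => (1/(k:ℝ)) * Real.log n + (1/(k:ℝ)) * Real.log ‖A ^ k‖) gelf ?_ ?_ ?_
    · -- upper: (1/k) log n + (1/k) log ‖A^k‖ → log lam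
      have h1 : Tendsto (fun k : ℕ => (1/(k:ℝ)) * Real.log n + (1/(k:ℝ)) * Real.log ‖A ^ k‖)
          atTop (nhds (0 * Real.log n + Real.log lam)) :=
        ((one_div_tendsto.mul_const (Real.log n)).add gelf)
      rw [zero_mul, zero_add] at h1
      exact h1
    · intro k
      refine mul_le_mul_of_nonneg_left ?_ (by positivity)
      exact Real.log_le_log (hAnorm_pos k) (hnorm_le k)
    · intro k
      have hlog : Real.log (g k) ≤ Real.log n + Real.log ‖A ^ k‖ := by
        rw [← Real.log_mul (by exact_mod_cast (NeZero.pos n).ne') (hAnorm_pos k).ne']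
        exact Real.log_le_log (hg_pos k) (hg_le_norm k)
      calc (1/(k:ℝ)) * Real.log (g k) ≤ (1/(k:ℝ)) * (Real.log n + Real.log ‖A ^ k‖) :=
            mul_le_mul_of_nonneg_left hlog (by positivity)
        _ = (1/(k:ℝ)) * Real.log n + (1/(k:ℝ)) * Real.log ‖A ^ k‖ := by ring
  -- shifted convergence
  have hu_shift : Tendsto (fun k : ℕ => (1/(k:ℝ)) * Real.log (g (k - T)))
      atTop (nhds (Real.log lam)) := by
    have comp : Tendsto (fun k : ℕ => (1/((k - T : ℕ):ℝ)) * Real.log (g (k - T)))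
        atTop (nhds (Real.log lam)) := hu.comp (tendsto_sub_atTop_nat T)
    have ratio : Tendsto (fun k : ℕ => ((k - T : ℕ):ℝ)/(k:ℝ)) atTop (nhds 1) := by
      have h2 : Tendsto (fun k : ℕ => 1 - (T:ℝ) * (1/(k:ℝ))) atTop (nhds (1 - (T:ℝ) * 0)) :=
        tendsto_const_nhds.sub (one_div_tendsto.const_mul (T:ℝ))
      rw [mul_zero, sub_zero] at h2
      refine h2.congr' ?_
      filter_upwards [eventually_ge_atTop (T+1)] with k hk
      have hk0 : (0:ℝ) < k := by
        have : (0:ℕ) < k := by omega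
        exact_mod_cast this
      rw [Nat.cast_sub (by omega : T ≤ k), sub_div, div_self hk0.ne', mul_one_div]
    have prod := ratio.mul comp
    rw [one_mul] at prod
    refine prod.congr' ?_
    filter_upwards [eventually_ge_atTop (T+1)] with k hk
    have hk0 : (0:ℝ) < k := by
      have : (0:ℕ) < k := by omega
      exact_mod_cast this
    have hkT : (0:ℝ) < ((k - T : ℕ):ℝ) := by
      have : (0:ℕ) < k - T := by omega
      exact_mod_cast this
    field_simp
  -- the main convergence
  have hmain : Tendsto (fun k : ℕ => (1/(k:ℝ)) * Real.log (f k)) atTop (nhds (Real.log lam)) := by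
    refine tendsto_of_tendsto_of_tendsto_of_le_of_le'
      (g := fun k : ℕ => (1/(k:ℝ)) * Real.log (x j₀ * c) + (1/(k:ℝ)) * Real.log (g (k - T)))
      (h := fun k : ℕ => (1/(k:ℝ)) * Real.log X + (1/(k:ℝ)) * Real.log (g k)) ?_ ?_ ?_ ?_
    · have h1 : Tendsto
          (fun k : ℕ => (1/(k:ℝ)) * Real.log (x j₀ * c) + (1/(k:ℝ)) * Real.log (g (k - T)))
          atTop (nhds (0 * Real.log (x j₀ * c) + Real.log lam)) :=
        (one_div_tendsto.mul_const (Real.log (x j₀ * c))).add hu_shift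
      rw [zero_mul, zero_add] at h1
      exact h1
    · have h1 : Tendsto (fun k : ℕ => (1/(k:ℝ)) * Real.log X + (1/(k:ℝ)) * Real.log (g k))
          atTop (nhds (0 * Real.log X + Real.log lam)) :=
        (one_div_tendsto.mul_const (Real.log X)).add hu
      rw [zero_mul, zero_add] at h1
      exact h1
    · -- lower bound eventually
      filter_upwards [eventually_ge_atTop T] with k hk
      have hc' : 0 < x j₀ * c := mul_pos hj₀ hc0
      have hkey : (x j₀ * c) * g (k - T) ≤ f k := by
        have := hfl (k - T)
        rwa [show k - T + T = k by omega] at this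
      have hlog : Real.log (x j₀ * c) + Real.log (g (k - T)) ≤ Real.log (f k) := by
        rw [← Real.log_mul hc'.ne' (hg_pos (k - T)).ne']
        exact Real.log_le_log (mul_pos hc' (hg_pos (k - T))) hkey
      calc (1/(k:ℝ)) * Real.log (x j₀ * c) + (1/(k:ℝ)) * Real.log (g (k - T))
            = (1/(k:ℝ)) * (Real.log (x j₀ * c) + Real.log (g (k - T))) := by ring
        _ ≤ (1/(k:ℝ)) * Real.log (f k) := mul_le_mul_of_nonneg_left hlog (by positivity)
    · -- upper bound eventually (in fact always)
      refine Eventually.of_forall fun k => ?_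
      have hlog : Real.log (f k) ≤ Real.log X + Real.log (g k) := by
        rw [← Real.log_mul hX_pos.ne' (hg_pos k).ne']
        exact Real.log_le_log (hf_pos k) (hf_le k)
      calc (1/(k:ℝ)) * Real.log (f k) ≤ (1/(k:ℝ)) * (Real.log X + Real.log (g k)) :=
            mul_le_mul_of_nonneg_left hlog (by positivity)
        _ = (1/(k:ℝ)) * Real.log X + (1/(k:ℝ)) * Real.log (g k) := by ring
  have hfinal : Tendsto (fun k : ℕ => (1 / (k : ℝ)) * Real.log (∑ i, |((M ^ k).mulVec x) i|))
      atTop (nhds (Real.log lam)) := by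
    refine hmain.congr fun k => ?_
    rw [hfk k]
  exact ⟨hfinal, hfinal.limsup_eq⟩
end

section
/- Let M be an n×n matrix with nonnegative entries whose spectral radius λ satisfies λ ≥ 1, and let J denote the all-ones row vector. Then sup over nonzero nonnegative integer vectors x of limsup_{k→∞} (1/k)·log(J · M^k · x) equals log λ, and the supremum is attained by some such vector x. -/
open Matrix Filter Topology
open scoped NNReal ENNReal

attribute [local instance] Matrix.linftyOpSeminormedAddCommGroup
  Matrix.linftyOpNormedAddCommGroup Matrix.linftyOpNormedSpace
  Matrix.linftyOpSemiNormedRing Matrix.linftyOpNormedRing Matrix.linftyOpNormedAlgebra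

namespace SpecRadAux

variable {n : ℕ} (M : Matrix (Fin n) (Fin n) ℝ)

lemma pow_entry_nonneg (hpos : ∀ i j, 0 ≤ M i j) (k : ℕ) (i j : Fin n) :
    0 ≤ (M ^ k) i j := by
  induction k generalizing i j with
  | zero =>
      rw [pow_zero, Matrix.one_apply]
      split <;> norm_num
  | succ k ih =>
      rw [pow_succ, Matrix.mul_apply]
      exact Finset.sum_nonneg fun l _ => mul_nonneg (ih _ _) (hpos _ _)

lemma map_pow_ofReal (k : ℕ) :
    (M.map Complex.ofReal) ^ k = (M ^ k).map Complex.ofReal := by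
  have h : M.map Complex.ofReal = Complex.ofRealHom.mapMatrix M := rfl
  rw [h, ← map_pow]
  rfl

/-- The total sum of entries of `M ^ k`. -/
noncomputable def S (k : ℕ) : ℝ := ∑ i, ∑ j, (M ^ k) i j

lemma norm_le_S (hpos : ∀ i j, 0 ≤ M i j) (k : ℕ) :
    ‖(M.map Complex.ofReal) ^ k‖ ≤ S M k := by
  have hB := pow_entry_nonneg M hpos k
  rw [map_pow_ofReal]
  have hnn : ‖((M ^ k).map Complex.ofReal)‖₊
      ≤ ∑ i, ∑ j, ((M ^ k) i j).toNNReal := by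
    rw [Matrix.linfty_opNNNorm_def]
    apply Finset.sup_le
    intro i _
    have hrow : ∀ j, ‖((M ^ k).map Complex.ofReal) i j‖₊ = ((M ^ k) i j).toNNReal := by
      intro j
      ext
      simp [Matrix.map_apply, Real.coe_toNNReal _ (hB i j), abs_of_nonneg (hB i j)]
    simp_rw [hrow]
    exact Finset.single_le_sum (f := fun i => ∑ j, ((M ^ k) i j).toNNReal)
      (fun i _ => zero_le) (Finset.mem_univ i)
  calc ‖((M ^ k).map Complex.ofReal)‖
      = ((‖((M ^ k).map Complex.ofReal)‖₊ : ℝ≥0) : ℝ) := rfl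
    _ ≤ ((∑ i, ∑ j, ((M ^ k) i j).toNNReal : ℝ≥0) : ℝ) := by exact_mod_cast hnn
    _ = S M k := by
        push_cast
        exact Finset.sum_congr rfl fun i _ => Finset.sum_congr rfl fun j _ =>
          Real.coe_toNNReal _ (hB i j)

lemma S_le_norm (hpos : ∀ i j, 0 ≤ M i j) (k : ℕ) :
    S M k ≤ (n : ℝ) * ‖(M.map Complex.ofReal) ^ k‖ := by
  have hB := pow_entry_nonneg M hpos k
  rw [map_pow_ofReal]
  have hrow : ∀ i : Fin n, (∑ j, (M ^ k) i j) ≤ ‖((M ^ k).map Complex.ofReal)‖ := by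
    intro i
    have h1 : (∑ j, ((M ^ k) i j).toNNReal) ≤ ‖((M ^ k).map Complex.ofReal)‖₊ := by
      rw [Matrix.linfty_opNNNorm_def]
      have hrow : ∀ j, ‖((M ^ k).map Complex.ofReal) i j‖₊ = ((M ^ k) i j).toNNReal := by
        intro j
        ext
        simp [Matrix.map_apply, Real.coe_toNNReal _ (hB i j), abs_of_nonneg (hB i j)]
      calc (∑ j, ((M ^ k) i j).toNNReal)
          = ∑ j, ‖((M ^ k).map Complex.ofReal) i j‖₊ :=
            Finset.sum_congr rfl fun j _ => (hrow j).symm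
        _ ≤ _ := Finset.le_sup (f := fun i => ∑ j, ‖((M ^ k).map Complex.ofReal) i j‖₊) (Finset.mem_univ i)
    calc (∑ j, (M ^ k) i j) = ((∑ j, ((M ^ k) i j).toNNReal : ℝ≥0) : ℝ) := by
          push_cast
          exact (Finset.sum_congr rfl fun j _ => Real.coe_toNNReal _ (hB i j)).symm
      _ ≤ ((‖((M ^ k).map Complex.ofReal)‖₊ : ℝ≥0) : ℝ) := by exact_mod_cast h1
      _ = ‖((M ^ k).map Complex.ofReal)‖ := rfl
  calc S M k ≤ ∑ _i : Fin n, ‖((M ^ k).map Complex.ofReal)‖ :=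
        Finset.sum_le_sum fun i _ => hrow i
    _ = (n : ℝ) * ‖((M ^ k).map Complex.ofReal)‖ := by
        simp [Finset.sum_const, nsmul_eq_mul]

lemma one_le_S (hpos : ∀ i j, 0 ≤ M i j) (hlam : 1 ≤ specRad M) (hn : 0 < n) (k : ℕ) :
    (1 : ℝ) ≤ S M k := by
  haveI : Nonempty (Fin n) := ⟨⟨0, hn⟩⟩
  set A := M.map Complex.ofReal with hA
  have hspec_ne : (spectrum ℂ A).Nonempty := spectrum.nonempty A
  have hKcpt : IsCompact ((fun z : ℂ => ‖z‖) '' spectrum ℂ A) :=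
    (spectrum.isCompact A).image continuous_norm
  have hmem := hKcpt.sSup_mem (hspec_ne.image _)
  obtain ⟨z0, hz0, habs0⟩ := hmem
  have habs : ‖z0‖ = specRad M := habs0
  have hmemk : z0 ^ k ∈ spectrum ℂ (A ^ k) :=
    spectrum.pow_image_subset A k ⟨z0, hz0, rfl⟩
  have hle := spectrum.norm_le_norm_of_mem hmemk
  calc (1 : ℝ) ≤ specRad M ^ k := one_le_pow₀ hlam
    _ = ‖z0‖ ^ k := by rw [habs]
    _ = ‖z0 ^ k‖ := (norm_pow _ _).symm
    _ ≤ ‖A ^ k‖ := hle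
    _ ≤ S M k := norm_le_S M hpos k

/-- The key convergence: `(1/k) log (S k)` tends to `log (specRad M)`. -/
lemma key (hpos : ∀ i j, 0 ≤ M i j) (hlam : 1 ≤ specRad M) (hn : 0 < n) :
    Tendsto (fun k : ℕ => (1 / (k : ℝ)) * Real.log (S M k)) atTop
      (𝓝 (Real.log (specRad M))) := by
  haveI : Nonempty (Fin n) := ⟨⟨0, hn⟩⟩
  set A := M.map Complex.ofReal with hA
  set lam := specRad M with hlamdef
  have hlam0 : (0 : ℝ) < lam := lt_of_lt_of_le one_pos hlam
  have hspec_ne : (spectrum ℂ A).Nonempty := spectrum.nonempty A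
  have hcpt : IsCompact (spectrum ℂ A) := spectrum.isCompact A
  have hKne : ((fun z : ℂ => ‖z‖) '' spectrum ℂ A).Nonempty := hspec_ne.image _
  have hKcpt : IsCompact ((fun z : ℂ => ‖z‖) '' spectrum ℂ A) :=
    hcpt.image continuous_norm
  have hbdd : BddAbove ((fun z : ℂ => ‖z‖) '' spectrum ℂ A) := hKcpt.bddAbove
  have hmem : lam ∈ (fun z : ℂ => ‖z‖) '' spectrum ℂ A := hKcpt.sSup_mem hKne
  obtain ⟨z0, hz0, habs0⟩ := hmem
  have habs : ‖z0‖ = lam := habs0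
  -- spectralRadius equals ofReal lam
  have hsr : spectralRadius ℂ A = ENNReal.ofReal lam := by
    apply le_antisymm
    · apply iSup₂_le
      intro z hz
      rw [← enorm_eq_nnnorm, ← ofReal_norm]
      apply ENNReal.ofReal_le_ofReal
      exact le_csSup hbdd ⟨z, hz, rfl⟩
    · have h0 : ENNReal.ofReal lam = (‖z0‖₊ : ℝ≥0∞) := by
        rw [← enorm_eq_nnnorm, ← ofReal_norm, habs]
      rw [h0]
      exact le_iSup₂ (f := fun z (_ : z ∈ spectrum ℂ A) => (‖z‖₊ : ℝ≥0∞)) z0 hz0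
  -- 1 ≤ ‖A ^ k‖
  have hAknorm : ∀ k : ℕ, (1 : ℝ) ≤ ‖A ^ k‖ := by
    intro k
    have hmemk : z0 ^ k ∈ spectrum ℂ (A ^ k) :=
      spectrum.pow_image_subset A k ⟨z0, hz0, rfl⟩
    have hle := spectrum.norm_le_norm_of_mem hmemk
    calc (1 : ℝ) ≤ lam ^ k := one_le_pow₀ hlam
      _ = ‖z0‖ ^ k := by rw [habs]
      _ = ‖z0 ^ k‖ := (norm_pow _ _).symm
      _ ≤ ‖A ^ k‖ := hle
  have hAkpos : ∀ k : ℕ, (0 : ℝ) < ‖A ^ k‖ := fun k => lt_of_lt_of_le one_pos (hAknorm k)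
  -- Gelfand's formula, real version
  have hgel : Tendsto (fun k : ℕ => ‖A ^ k‖ ^ (1 / (k : ℝ))) atTop (𝓝 lam) := by
    have h1 := spectrum.pow_norm_pow_one_div_tendsto_nhds_spectralRadius A
    rw [hsr] at h1
    have h2 := (ENNReal.tendsto_toReal (ENNReal.ofReal_ne_top)).comp h1
    have h3 : Tendsto (fun k : ℕ => (ENNReal.ofReal (‖A ^ k‖ ^ (1 / (k : ℝ)))).toReal)
        atTop (𝓝 (ENNReal.ofReal lam).toReal) := h2
    rw [ENNReal.toReal_ofReal hlam0.le] at h3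
    refine h3.congr fun k => ?_
    exact ENNReal.toReal_ofReal (Real.rpow_nonneg (norm_nonneg _) _)
  -- log version
  have hloga : Tendsto (fun k : ℕ => (1 / (k : ℝ)) * Real.log ‖A ^ k‖) atTop
      (𝓝 (Real.log lam)) := by
    have h := ((Real.continuousAt_log hlam0.ne').tendsto).comp hgel
    refine h.congr fun k => ?_
    exact Real.log_rpow (hAkpos k) _
  -- sandwich
  have hS1 : ∀ k, (1 : ℝ) ≤ S M k := fun k => (hAknorm k).trans (norm_le_S M hpos k)
  have hSpos : ∀ k, (0 : ℝ) < S M k := fun k => lt_of_lt_of_le one_pos (hS1 k)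
  have hlow : ∀ k : ℕ, (1 / (k : ℝ)) * Real.log ‖A ^ k‖
      ≤ (1 / (k : ℝ)) * Real.log (S M k) := by
    intro k
    exact mul_le_mul_of_nonneg_left
      (Real.log_le_log (hAkpos k) (norm_le_S M hpos k)) (by positivity)
  have hup : ∀ k : ℕ, (1 / (k : ℝ)) * Real.log (S M k)
      ≤ (1 / (k : ℝ)) * Real.log ‖A ^ k‖ + (1 / (k : ℝ)) * Real.log n := by
    intro k
    have h1 : Real.log (S M k) ≤ Real.log ((n : ℝ) * ‖A ^ k‖) :=
      Real.log_le_log (hSpos k) (S_le_norm M hpos k)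
    have h2 : Real.log ((n : ℝ) * ‖A ^ k‖) = Real.log n + Real.log ‖A ^ k‖ :=
      Real.log_mul (by positivity) (hAkpos k).ne'
    have h3 : Real.log (S M k) ≤ Real.log ‖A ^ k‖ + Real.log n := by
      rw [h2] at h1; linarith
    calc (1 / (k : ℝ)) * Real.log (S M k)
        ≤ (1 / (k : ℝ)) * (Real.log ‖A ^ k‖ + Real.log n) :=
          mul_le_mul_of_nonneg_left h3 (by positivity)
      _ = (1 / (k : ℝ)) * Real.log ‖A ^ k‖ + (1 / (k : ℝ)) * Real.log n := by ring
  have hupper : Tendsto (fun k : ℕ => (1 / (k : ℝ)) * Real.log ‖A ^ k‖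
      + (1 / (k : ℝ)) * Real.log n) atTop (𝓝 (Real.log lam + 0)) := by
    apply hloga.add
    have := tendsto_one_div_atTop_nhds_zero_nat.mul_const (Real.log n)
    simpa using this
  rw [add_zero] at hupper
  exact tendsto_of_tendsto_of_tendsto_of_le_of_le hloga hupper hlow hup

/-- Lower bound on the growth sequence, used for coboundedness. -/
lemma lower_bound (hpos : ∀ i j, 0 ≤ M i j) (hn : 0 < n) (x : Fin n → ℕ) :
    ∃ c : ℝ, ∀ k : ℕ,
      c ≤ (1 / (k : ℝ)) * Real.log (∑ i, ((M ^ k).mulVec (fun j => (x j : ℝ))) i) := by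
  haveI : Nonempty (Fin n) := ⟨⟨0, hn⟩⟩
  haveI : Nonempty (Fin n × Fin n) := inferInstance
  set δ : ℝ := Finset.univ.inf' Finset.univ_nonempty
    (fun p : Fin n × Fin n => if 0 < M p.1 p.2 then min 1 (M p.1 p.2) else 1) with hδ
  have hδpos : 0 < δ := by
    rw [hδ, Finset.lt_inf'_iff]
    intro p _
    split
    · exact lt_min one_pos (by assumption)
    · exact one_pos
  have hδ1 : δ ≤ 1 := by
    rw [hδ]
    refine le_trans (Finset.inf'_le _ (Finset.mem_univ (Classical.arbitrary _))) ?_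
    split
    · exact min_le_left _ _
    · exact le_refl 1
  have hδle : ∀ i j, 0 < M i j → δ ≤ M i j := by
    intro i j h
    have := Finset.inf'_le
      (fun p : Fin n × Fin n => if 0 < M p.1 p.2 then min 1 (M p.1 p.2) else 1)
      (Finset.mem_univ (i, j))
    rw [if_pos h] at this
    exact this.trans (min_le_right _ _)
  set xR : Fin n → ℝ := fun j => (x j : ℝ) with hxR
  have claim : ∀ k i, 0 ≤ ((M ^ k).mulVec xR) i ∧
      (((M ^ k).mulVec xR) i = 0 ∨ δ ^ k ≤ ((M ^ k).mulVec xR) i) := by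
    intro k
    induction k with
    | zero =>
        intro i
        have h0 : ((M ^ 0).mulVec xR) i = xR i := by
          simp [Matrix.mulVec_one, pow_zero, Matrix.one_mulVec]
        rw [h0]
        refine ⟨by positivity, ?_⟩
        rcases Nat.eq_zero_or_pos (x i) with h | h
        · left; simp [hxR, h]
        · right
          rw [pow_zero]
          have h1 : (1 : ℝ) ≤ (x i : ℝ) := by exact_mod_cast h
          exact h1
    | succ k ih =>
        intro i
        have hre : ((M ^ (k + 1)).mulVec xR) i = ∑ j, M i j * ((M ^ k).mulVec xR) j := by
          rw [pow_succ', ← Matrix.mulVec_mulVec]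
          simp [Matrix.mulVec, dotProduct]
        have hterm : ∀ j, 0 ≤ M i j * ((M ^ k).mulVec xR) j :=
          fun j => mul_nonneg (hpos i j) (ih j).1
        have hnonneg : 0 ≤ ((M ^ (k + 1)).mulVec xR) i := by
          rw [hre]; exact Finset.sum_nonneg fun j _ => hterm j
        refine ⟨hnonneg, ?_⟩
        rcases eq_or_lt_of_le hnonneg with h0 | hpos'
        · left; exact h0.symm
        · right
          rw [hre] at hpos' ⊢
          have hsum : ∑ _j : Fin n, (0 : ℝ) < ∑ j, M i j * ((M ^ k).mulVec xR) j := by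
            simpa using hpos'
          obtain ⟨j, -, hj⟩ := Finset.exists_lt_of_sum_lt hsum
          have hj' : 0 < M i j * ((M ^ k).mulVec xR) j := by simpa using hj
          have hMij : 0 < M i j := by
            by_contra h
            push_neg at h
            have : M i j = 0 := le_antisymm h (hpos i j)
            rw [this, zero_mul] at hj'
            exact lt_irrefl _ hj'
          have hwj : 0 < ((M ^ k).mulVec xR) j := by
            by_contra h
            push_neg at h
            have : ((M ^ k).mulVec xR) j = 0 := le_antisymm h (ih j).1
            rw [this, mul_zero] at hj'
            exact lt_irrefl _ hj'
          have hwj' : δ ^ k ≤ ((M ^ k).mulVec xR) j := by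
            rcases (ih j).2 with h | h
            · rw [h] at hwj; exact absurd hwj (lt_irrefl _)
            · exact h
          calc δ ^ (k + 1) = δ * δ ^ k := by ring
            _ ≤ M i j * ((M ^ k).mulVec xR) j :=
                mul_le_mul (hδle i j hMij) hwj' (by positivity) (hpos i j)
            _ ≤ ∑ j, M i j * ((M ^ k).mulVec xR) j :=
                Finset.single_le_sum (fun j _ => hterm j) (Finset.mem_univ j)
  refine ⟨min 0 (Real.log δ), fun k => ?_⟩
  set T : ℝ := ∑ i, ((M ^ k).mulVec xR) i with hT
  have hTnonneg : 0 ≤ T := Finset.sum_nonneg fun i _ => (claim k i).1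
  rcases eq_or_lt_of_le hTnonneg with h0 | hTpos
  · rw [← h0, Real.log_zero, mul_zero]
    exact min_le_left _ _
  · rcases Nat.eq_zero_or_pos k with hk | hk
    · subst hk
      simp only [Nat.cast_zero, div_zero, zero_mul]
      exact min_le_left _ _
    · have hTge : δ ^ k ≤ T := by
        have hsum : ∑ _i : Fin n, (0 : ℝ) < ∑ i, ((M ^ k).mulVec xR) i := by
          simpa [hT] using hTpos
        obtain ⟨i, -, hi⟩ := Finset.exists_lt_of_sum_lt hsum
        have hi' : 0 < ((M ^ k).mulVec xR) i := by simpa using hi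
        have := (claim k i).2.resolve_left (by exact fun h => absurd (h ▸ hi') (lt_irrefl _))
        exact this.trans (Finset.single_le_sum (fun i _ => (claim k i).1) (Finset.mem_univ i))
      have hlog : (k : ℝ) * Real.log δ ≤ Real.log T := by
        have := Real.log_le_log (by positivity) hTge
        rwa [Real.log_pow] at this
      have h1k : (0 : ℝ) ≤ 1 / (k : ℝ) := by positivity
      calc min 0 (Real.log δ) ≤ Real.log δ := min_le_right _ _
        _ = (1 / (k : ℝ)) * ((k : ℝ) * Real.log δ) := by
            field_simp
        _ ≤ (1 / (k : ℝ)) * Real.log T := mul_le_mul_of_nonneg_left hlog h1k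
  -- end
end SpecRadAux

open SpecRadAux in
/-- For a nonnegative matrix `M` with spectral radius `λ ≥ 1`, the supremum over nonzero
nonnegative integer vectors `x` of `limsup (1/k) log (J · M^k · x)` (where `J·M^k·x` is the
sum of the entries of `M^k x`) equals `log λ`, and is attained by some such `x`. -/
theorem sup_growth_rate_eq_log_spectral_radius
    {n : ℕ} (M : Matrix (Fin n) (Fin n) ℝ)
    (hpos : ∀ i j, 0 ≤ M i j) (hlam : 1 ≤ specRad M) :
    IsGreatest
      {r : ℝ | ∃ x : Fin n → ℕ, x ≠ 0 ∧
        r = limsup (fun k : ℕ =>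
          (1 / (k : ℝ)) * Real.log (∑ i, ((M ^ k).mulVec (fun j => (x j : ℝ))) i)) atTop}
      (Real.log (specRad M)) := by
  rcases Nat.eq_zero_or_pos n with hn | hn
  · exfalso
    subst hn
    have hsub : Subsingleton (Matrix (Fin 0) (Fin 0) ℂ) :=
      ⟨fun A B => by ext i; exact absurd i.2 (by omega)⟩
    have hempty : spectrum ℂ (M.map Complex.ofReal) = ∅ := by
      ext z
      simp only [Set.mem_empty_iff_false, iff_false]
      intro hz
      exact (spectrum.mem_iff.mp hz) (@isUnit_of_subsingleton _ _ hsub _)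
    have : specRad M = 0 := by
      rw [specRad, hempty, Set.image_empty, Real.sSup_empty]
    rw [this] at hlam
    linarith
  have hkey := key M hpos hlam hn
  constructor
  · -- membership: the all-ones vector attains the sup
    refine ⟨fun _ => 1, ?_, ?_⟩
    · intro h
      have := congrFun h ⟨0, hn⟩
      simp at this
    · have heq : (fun k : ℕ =>
          (1 / (k : ℝ)) * Real.log (∑ i, ((M ^ k).mulVec (fun j => ((1 : ℕ) : ℝ))) i))
          = fun k : ℕ => (1 / (k : ℝ)) * Real.log (S M k) := by
        funext k
        simp [Matrix.mulVec, dotProduct, S]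
      rw [heq, hkey.limsup_eq]
  · rintro r ⟨x, hx, rfl⟩
    set xR : Fin n → ℝ := fun j => (x j : ℝ) with hxR
    set f : ℕ → ℝ := fun k => (1 / (k : ℝ)) * Real.log (∑ i, ((M ^ k).mulVec xR) i) with hf
    obtain ⟨c, hc⟩ := lower_bound M hpos hn x
    have hlb : IsBoundedUnder (· ≥ ·) atTop f := isBoundedUnder_of ⟨c, fun k => hc k⟩
    have hcobdd : IsCoboundedUnder (· ≤ ·) atTop f := hlb.isCoboundedUnder_le
    -- the comparison sequence
    set C : ℝ := ∑ j, (x j : ℝ) with hC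
    have hC1 : (1 : ℝ) ≤ C := by
      have hxj : ∃ j, x j ≠ 0 := by
        by_contra h
        push_neg at h
        exact hx (funext fun j => h j)
      obtain ⟨j, hj⟩ := hxj
      have h1 : (1 : ℝ) ≤ (x j : ℝ) := by exact_mod_cast Nat.one_le_iff_ne_zero.mpr hj
      refine h1.trans ?_
      rw [hC]
      exact Finset.single_le_sum (f := fun j => ((x j : ℕ) : ℝ))
        (fun j _ => by positivity) (Finset.mem_univ j)
    have hCpos : (0 : ℝ) < C := lt_of_lt_of_le one_pos hC1
    have hS1 : ∀ k, (1 : ℝ) ≤ S M k := fun k => one_le_S M hpos hlam hn k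
    set g : ℕ → ℝ := fun k => (1 / (k : ℝ)) * Real.log C
      + (1 / (k : ℝ)) * Real.log (S M k) with hg
    have hgt : Tendsto g atTop (𝓝 (0 + Real.log (specRad M))) := by
      apply Tendsto.add
      · have := tendsto_one_div_atTop_nhds_zero_nat.mul_const (Real.log C)
        simpa using this
      · exact hkey
    rw [zero_add] at hgt
    have hbg : IsBoundedUnder (· ≤ ·) atTop g := hgt.isBoundedUnder_le
    have hfg : ∀ k, f k ≤ g k := by
      intro k
      have hBnn := pow_entry_nonneg M hpos k
      have hterm_nonneg : 0 ≤ ∑ i, ((M ^ k).mulVec xR) i := by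
        refine Finset.sum_nonneg fun i _ => ?_
        show 0 ≤ ∑ j, (M ^ k) i j * xR j
        exact Finset.sum_nonneg fun j _ => mul_nonneg (hBnn i j) (by positivity)
      have hSk := hS1 k
      have hSkpos : (0 : ℝ) < S M k := lt_of_lt_of_le one_pos hSk
      have hlog : Real.log (∑ i, ((M ^ k).mulVec xR) i) ≤ Real.log C + Real.log (S M k) := by
        rcases eq_or_lt_of_le hterm_nonneg with h0 | hpos'
        · rw [← h0, Real.log_zero]
          have h1 : 0 ≤ Real.log C := Real.log_nonneg hC1
          have h2 : 0 ≤ Real.log (S M k) := Real.log_nonneg hSk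
          linarith
        · have hle : (∑ i, ((M ^ k).mulVec xR) i) ≤ C * S M k := by
            have : ∀ i, ((M ^ k).mulVec xR) i ≤ C * ∑ j, (M ^ k) i j := by
              intro i
              have : ∀ j, (M ^ k) i j * xR j ≤ (M ^ k) i j * C := by
                intro j
                apply mul_le_mul_of_nonneg_left _ (hBnn i j)
                exact Finset.single_le_sum (fun j _ => by positivity) (Finset.mem_univ j)
              calc ((M ^ k).mulVec xR) i = ∑ j, (M ^ k) i j * xR j := rfl
                _ ≤ ∑ j, (M ^ k) i j * C := Finset.sum_le_sum fun j _ => this j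
                _ = C * ∑ j, (M ^ k) i j := by rw [Finset.mul_sum]; congr 1; funext j; ring
            calc (∑ i, ((M ^ k).mulVec xR) i) ≤ ∑ i, C * ∑ j, (M ^ k) i j :=
                Finset.sum_le_sum fun i _ => this i
              _ = C * S M k := by rw [S, Finset.mul_sum]
          calc Real.log (∑ i, ((M ^ k).mulVec xR) i) ≤ Real.log (C * S M k) :=
              Real.log_le_log hpos' hle
            _ = Real.log C + Real.log (S M k) := Real.log_mul hCpos.ne' hSkpos.ne'
      calc f k = (1 / (k : ℝ)) * Real.log (∑ i, ((M ^ k).mulVec xR) i) := rfl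
        _ ≤ (1 / (k : ℝ)) * (Real.log C + Real.log (S M k)) :=
            mul_le_mul_of_nonneg_left hlog (by positivity)
        _ = g k := by rw [hg]; ring
    calc limsup f atTop ≤ limsup g atTop :=
        limsup_le_limsup (Eventually.of_forall hfg) hcobdd hbg
      _ = Real.log (specRad M) := hgt.limsup_eq
end
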